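/- Let V < 0 be continuous, and Φ(λ) = −tλ² + ∫_{x'}^x √(λ²−V(s)) ds with t > 0, x ≥ x', |x| ≥ |x'|, on the region K = {0 < λ ≤ R⟨x⟩^{-μ/2}}. Assume c₂M₁ ≤ ∫_{x'}^x (λ²−V(s))^{-1/2}ds ≤ M₁ on K. If t ≤ (c₂/4)M₁ then |Φ'(λ)| ≥ (c₂/2)M₁λ for λ ∈ K; if t ≥ M₁ then |Φ'(λ)| ≥ tλ for λ ∈ K. In both cases |Φ''(λ)| ≤ 2max(t, M₁) on K. -/

import Mathlib

open Set intervalIntegral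

lemma aux_sqrt_deriv (v l : ℝ) (h : 0 < l^2 - v) :
    HasDerivAt (fun l => Real.sqrt (l^2 - v)) (l / Real.sqrt (l^2 - v)) l := by
  have h1 : HasDerivAt (fun l : ℝ => l^2 - v) (2 * l) l := by
    simpa using (hasDerivAt_pow 2 l).sub_const v
  have h2 := (Real.hasDerivAt_sqrt h.ne').comp l h1
  refine h2.congr_deriv ?_
  have hs : Real.sqrt (l^2 - v) ≠ 0 := (Real.sqrt_pos.2 h).ne'
  field_simp

lemma aux_sqrt_deriv2 (v l : ℝ) (h : 0 < l^2 - v) :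
    HasDerivAt (fun l => l / Real.sqrt (l^2 - v))
      ((-v) / ((l^2 - v) * Real.sqrt (l^2 - v))) l := by
  have hs : 0 < Real.sqrt (l^2 - v) := Real.sqrt_pos.2 h
  have h2 := (hasDerivAt_id l).div (aux_sqrt_deriv v l h) hs.ne'
  refine h2.congr_deriv ?_
  have hsq : Real.sqrt (l^2 - v) ^ 2 = l^2 - v := Real.sq_sqrt h.le
  field_simp
  rw [hsq, id]; ring

lemma aux_rpow_inv (A : ℝ) (h : 0 < A) : A ^ (-(1:ℝ)/2) = (Real.sqrt A)⁻¹ := by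
  rw [neg_div, Real.rpow_neg h.le, ← Real.sqrt_eq_rpow]

/-- Non-resonant low-energy phase bounds: on `K = {0 < λ ≤ R⟨x⟩^{-μ/2}}`, if
`t ≤ (c₂/4)M₁` then `|Φ'(λ)| ≥ (c₂/2)M₁λ`; if `t ≥ M₁` then `|Φ'(λ)| ≥ tλ`; and
in both cases `|Φ''(λ)| ≤ 2 max(t, M₁)`. -/
theorem nonresonant_low_energy_phase (μ R : ℝ) (hμ : μ ∈ Ioo (0:ℝ) 2) (hR : 1 ≤ R)
    (V : ℝ → ℝ) (hVc : Continuous V) (hneg : ∀ s, V s < 0)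
    (t x x' c₂ : ℝ) (ht : 0 < t) (hxx' : x' ≤ x) (hxa : |x'| ≤ |x|) (hc₂ : 0 < c₂)
    (M₁ : ℝ)
    (hM₁ : M₁ = ∫ s in x'..x, |V s| ^ (-(1:ℝ)/2))
    (hlow : ∀ l : ℝ, 0 < l → l ≤ R * (1 + x^2) ^ (-(μ/4)) →
      c₂ * M₁ ≤ (∫ s in x'..x, (l^2 - V s) ^ (-(1:ℝ)/2)) ∧
      (∫ s in x'..x, (l^2 - V s) ^ (-(1:ℝ)/2)) ≤ M₁) :
    let Φ : ℝ → ℝ := fun l => -t * l^2 + ∫ s in x'..x, Real.sqrt (l^2 - V s)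
    (t ≤ (c₂/4) * M₁ → ∀ l : ℝ, 0 < l → l ≤ R * (1 + x^2) ^ (-(μ/4)) →
      (c₂/2) * M₁ * l ≤ |deriv Φ l|) ∧
    (M₁ ≤ t → ∀ l : ℝ, 0 < l → l ≤ R * (1 + x^2) ^ (-(μ/4)) →
      t * l ≤ |deriv Φ l|) ∧
    (∀ l : ℝ, 0 < l → l ≤ R * (1 + x^2) ^ (-(μ/4)) →
      |deriv (deriv Φ) l| ≤ 2 * max t M₁) := by
  intro Φ
  have hpos : ∀ (l s : ℝ), 0 < l^2 - V s := fun l s => by nlinarith [hneg s, sq_nonneg l]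
  -- min and max of -V on [x', x]
  obtain ⟨s₀, hs₀mem, hmin'⟩ := (isCompact_Icc (a := x') (b := x)).exists_isMinOn
    (nonempty_Icc.2 hxx') (hVc.neg.continuousOn)
  obtain ⟨s₁, hs₁mem, hmax'⟩ := (isCompact_Icc (a := x') (b := x)).exists_isMaxOn
    (nonempty_Icc.2 hxx') (hVc.neg.continuousOn)
  have hmin : ∀ s ∈ Icc x' x, -V s₀ ≤ -V s := fun s hs => hmin' hs
  have hmax : ∀ s ∈ Icc x' x, -V s ≤ -V s₁ := fun s hs => hmax' hs
  set m : ℝ := -V s₀ with hm_def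
  set Cm : ℝ := -V s₁ with hCm_def
  have hm : 0 < m := by simp only [hm_def]; linarith [hneg s₀]
  have hCm : 0 < Cm := by simp only [hCm_def]; linarith [hneg s₁]
  have hsm : 0 < Real.sqrt m := Real.sqrt_pos.2 hm
  have hsql : ∀ (l s : ℝ), 0 < Real.sqrt (l^2 - V s) := fun l s => Real.sqrt_pos.2 (hpos l s)
  have hcont1 : ∀ l : ℝ, Continuous fun s => Real.sqrt (l^2 - V s) :=
    fun l => Real.continuous_sqrt.comp (continuous_const.sub hVc)
  have hcont2 : ∀ l : ℝ, Continuous fun s => l / Real.sqrt (l^2 - V s) :=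
    fun l => continuous_const.div (hcont1 l) (fun s => (hsql l s).ne')
  have hcont3 : ∀ l : ℝ, Continuous fun s => (-V s) / ((l^2 - V s) * Real.sqrt (l^2 - V s)) :=
    fun l => hVc.neg.div ((continuous_const.sub hVc).mul (hcont1 l))
      (fun s => (mul_pos (hpos l s) (hsql l s)).ne')
  have hcont4 : ∀ l : ℝ, Continuous fun s => (Real.sqrt (l^2 - V s))⁻¹ :=
    fun l => (hcont1 l).inv₀ (fun s => (hsql l s).ne')
  have hIcc : ∀ s ∈ Set.uIoc x' x, s ∈ Icc x' x := by
    intro s hs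
    rw [uIoc_of_le hxx'] at hs
    exact Ioc_subset_Icc_self hs
  -- first differentiation under the integral
  have hA : ∀ l₀ : ℝ, HasDerivAt (fun l => ∫ s in x'..x, Real.sqrt (l^2 - V s))
      (∫ s in x'..x, l₀ / Real.sqrt (l₀^2 - V s)) l₀ := by
    intro l₀
    have key := intervalIntegral.hasDerivAt_integral_of_dominated_loc_of_deriv_le
      (F := fun l s => Real.sqrt (l^2 - V s)) (F' := fun l s => l / Real.sqrt (l^2 - V s))
      (μ := MeasureTheory.volume) (x₀ := l₀) (bound := fun _ => (|l₀| + 1) / Real.sqrt m) (a := x') (b := x)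
      (Metric.ball_mem_nhds l₀ one_pos)
      (Filter.Eventually.of_forall (fun l => ((hcont1 l)).aestronglyMeasurable))
      ((hcont1 l₀).intervalIntegrable x' x)
      ((hcont2 l₀).aestronglyMeasurable)
      ?_ (intervalIntegrable_const) ?_
    · exact key.2
    · refine MeasureTheory.ae_of_all _ (fun s hs l hl => ?_)
      have hsI := hIcc s hs
      have h1 : |l - l₀| < 1 := by rwa [Metric.mem_ball, Real.dist_eq] at hl
      have h2 : |l| ≤ |l₀| + 1 := by
        have := abs_sub_abs_le_abs_sub l l₀; linarith
      have h3 : Real.sqrt m ≤ Real.sqrt (l^2 - V s) := by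
        apply Real.sqrt_le_sqrt
        have := hmin s hsI
        nlinarith [sq_nonneg l]
      rw [Real.norm_eq_abs, abs_div, abs_of_nonneg (Real.sqrt_nonneg _)]
      exact div_le_div₀ (by positivity) h2 hsm h3
    · exact MeasureTheory.ae_of_all _ (fun s _ l _ => aux_sqrt_deriv (V s) l (hpos l s))
  -- second differentiation under the integral
  have hB : ∀ l₀ : ℝ, HasDerivAt (fun l => ∫ s in x'..x, l / Real.sqrt (l^2 - V s))
      (∫ s in x'..x, (-V s) / ((l₀^2 - V s) * Real.sqrt (l₀^2 - V s))) l₀ := by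
    intro l₀
    have key := intervalIntegral.hasDerivAt_integral_of_dominated_loc_of_deriv_le
      (F := fun l s => l / Real.sqrt (l^2 - V s))
      (F' := fun l s => (-V s) / ((l^2 - V s) * Real.sqrt (l^2 - V s)))
      (μ := MeasureTheory.volume) (x₀ := l₀) (bound := fun _ => Cm / (m * Real.sqrt m)) (a := x') (b := x)
      (Metric.ball_mem_nhds l₀ one_pos)
      (Filter.Eventually.of_forall (fun l => ((hcont2 l)).aestronglyMeasurable))
      ((hcont2 l₀).intervalIntegrable x' x)
      ((hcont3 l₀).aestronglyMeasurable)
      ?_ (intervalIntegrable_const) ?_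
    · exact key.2
    · refine MeasureTheory.ae_of_all _ (fun s hs l _ => ?_)
      have hsI := hIcc s hs
      have h1 : m ≤ l^2 - V s := by
        have := hmin s hsI; nlinarith [sq_nonneg l]
      have h2 : Real.sqrt m ≤ Real.sqrt (l^2 - V s) := Real.sqrt_le_sqrt h1
      have h3 : -V s ≤ Cm := hmax s hsI
      rw [Real.norm_eq_abs, abs_of_nonneg (div_nonneg (by linarith [hneg s])
        (mul_nonneg (hpos l s).le (Real.sqrt_nonneg _)))]
      · exact div_le_div₀ hCm.le h3 (mul_pos hm hsm)
          (mul_le_mul h1 h2 (Real.sqrt_nonneg _) (hpos l s).le)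
    · exact MeasureTheory.ae_of_all _ (fun s _ l _ => aux_sqrt_deriv2 (V s) l (hpos l s))
  -- derivative formulas
  have hD : ∀ l₀ : ℝ, HasDerivAt Φ (-t * (2 * l₀) + ∫ s in x'..x, l₀ / Real.sqrt (l₀^2 - V s)) l₀ := by
    intro l₀
    have h1 : HasDerivAt (fun l : ℝ => -t * l^2) (-t * (2 * l₀)) l₀ := by
      simpa using (hasDerivAt_pow 2 l₀).const_mul (-t)
    exact h1.add (hA l₀)
  have hderiv : deriv Φ = fun l => -t * (2 * l) + ∫ s in x'..x, l / Real.sqrt (l^2 - V s) :=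
    funext fun l => (hD l).deriv
  have hD2 : ∀ l₀ : ℝ, HasDerivAt (deriv Φ)
      (-t * 2 + ∫ s in x'..x, (-V s) / ((l₀^2 - V s) * Real.sqrt (l₀^2 - V s))) l₀ := by
    intro l₀
    rw [hderiv]
    have h1 : HasDerivAt (fun l : ℝ => -t * (2 * l)) (-t * 2) l₀ := by
      simpa using ((hasDerivAt_id l₀).const_mul (2:ℝ)).const_mul (-t)
    exact h1.add (hB l₀)
  have hderiv2 : ∀ l : ℝ, deriv (deriv Φ) l
      = -t * 2 + ∫ s in x'..x, (-V s) / ((l^2 - V s) * Real.sqrt (l^2 - V s)) :=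
    fun l => (hD2 l).deriv
  -- rewriting the rpow integrals
  have hconv : ∀ l : ℝ, (∫ s in x'..x, (l^2 - V s) ^ (-(1:ℝ)/2))
      = ∫ s in x'..x, (Real.sqrt (l^2 - V s))⁻¹ :=
    fun l => intervalIntegral.integral_congr (fun s _ => aux_rpow_inv _ (hpos l s))
  have hpull : ∀ l : ℝ, (∫ s in x'..x, l / Real.sqrt (l^2 - V s))
      = l * ∫ s in x'..x, (Real.sqrt (l^2 - V s))⁻¹ := by
    intro l
    rw [← intervalIntegral.integral_const_mul]
    exact intervalIntegral.integral_congr (fun s _ => div_eq_mul_inv _ _)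
  have hM₁0 : 0 ≤ M₁ := by
    rw [hM₁]
    exact intervalIntegral.integral_nonneg hxx' (fun u _ => by positivity)
  refine ⟨?_, ?_, ?_⟩
  · -- case t ≤ (c₂/4) M₁
    intro hts l hl hlR
    obtain ⟨hlo, hhi⟩ := hlow l hl hlR
    rw [hconv l] at hlo hhi
    have hd : deriv Φ l = -t * (2 * l) + l * ∫ s in x'..x, (Real.sqrt (l^2 - V s))⁻¹ := by
      simp only [hderiv]; rw [hpull l]
    have hkey : (c₂/2) * M₁ * l ≤ deriv Φ l := by
      rw [hd]
      nlinarith [mul_nonneg hl.le (sub_nonneg.2 hlo), mul_nonneg hl.le (sub_nonneg.2 hts)]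
    exact hkey.trans (le_abs_self _)
  · -- case M₁ ≤ t
    intro hMt l hl hlR
    obtain ⟨hlo, hhi⟩ := hlow l hl hlR
    rw [hconv l] at hlo hhi
    have hd : deriv Φ l = -t * (2 * l) + l * ∫ s in x'..x, (Real.sqrt (l^2 - V s))⁻¹ := by
      simp only [hderiv]; rw [hpull l]
    have hkey : t * l ≤ -(deriv Φ l) := by
      rw [hd]
      nlinarith [mul_le_mul_of_nonneg_left hhi hl.le, mul_le_mul_of_nonneg_left hMt hl.le]
    exact hkey.trans (neg_le_abs _)
  · -- second derivative bound
    intro l hl hlR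
    obtain ⟨hlo, hhi⟩ := hlow l hl hlR
    rw [hconv l] at hhi
    have hJ0 : 0 ≤ ∫ s in x'..x, (-V s) / ((l^2 - V s) * Real.sqrt (l^2 - V s)) :=
      intervalIntegral.integral_nonneg hxx' (fun s _ => div_nonneg (by linarith [hneg s])
        (mul_nonneg (hpos l s).le (Real.sqrt_nonneg _)))
    have hJle : (∫ s in x'..x, (-V s) / ((l^2 - V s) * Real.sqrt (l^2 - V s)))
        ≤ ∫ s in x'..x, (Real.sqrt (l^2 - V s))⁻¹ := by
      apply intervalIntegral.integral_mono_on hxx'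
        ((hcont3 l).intervalIntegrable x' x) ((hcont4 l).intervalIntegrable x' x)
      intro s _
      have hApos := hpos l s
      have hs := hsql l s
      rw [div_le_iff₀ (mul_pos hApos hs)]
      have hinv : (Real.sqrt (l^2 - V s))⁻¹ * Real.sqrt (l^2 - V s) = 1 :=
        inv_mul_cancel₀ hs.ne'
      calc (-V s) ≤ (l^2 - V s) * 1 := by nlinarith [sq_nonneg l]
        _ = (Real.sqrt (l^2 - V s))⁻¹ * ((l^2 - V s) * Real.sqrt (l^2 - V s)) := by
            rw [← hinv]; ring
    have hJM : (∫ s in x'..x, (-V s) / ((l^2 - V s) * Real.sqrt (l^2 - V s))) ≤ M₁ :=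
      hJle.trans hhi
    rw [hderiv2 l]
    have hmax1 : t ≤ max t M₁ := le_max_left _ _
    have hmax2 : M₁ ≤ max t M₁ := le_max_right _ _
    have hmax0 : 0 ≤ max t M₁ := ht.le.trans hmax1
    rw [abs_le]
    constructor <;> linarith
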